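/- Let k ≥ 3, let ρ be an h-ary central relation on E_k (h ≥ 2) and σ an s-ary central relation on E_k (s ≥ 1) with σ ≠ ρ. If σ is of type I, II, III, IV or V, then Pol{ρ,σ} is maximal in Pol ρ. -/

import Mathlib

/-- The set of finitary operations on `Fin k` (all arities). -/
abbrev Op (k : ℕ) := Σ n : ℕ, ((Fin n → Fin k) → Fin k)

/-- An `n`-ary operation `f` preserves an `h`-ary relation `ρ`. -/
def Preserves {k n h : ℕ} (f : (Fin n → Fin k) → Fin k)
    (ρ : Set (Fin h → Fin k)) : Prop :=
  ∀ a : Fin h → Fin n → Fin k,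
    (∀ i : Fin n, (fun j => a j i) ∈ ρ) → (fun j => f (a j)) ∈ ρ

/-- An `n`-ary operation preserves a unary relation (a subset of `Fin k`). -/
def PreservesU {k n : ℕ} (f : (Fin n → Fin k) → Fin k) (σ : Set (Fin k)) : Prop :=
  ∀ x : Fin n → Fin k, (∀ i, x i ∈ σ) → f x ∈ σ

/-- `Pol ρ` for a single `h`-ary relation. -/
def Pol1 {k h : ℕ} (ρ : Set (Fin h → Fin k)) : Set (Op k) :=
  {f | Preserves f.2 ρ}

/-- `Pol {ρ, σ}` for two relations of possibly different arities. -/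
def Pol2 {k h s : ℕ} (ρ : Set (Fin h → Fin k)) (σ : Set (Fin s → Fin k)) : Set (Op k) :=
  Pol1 ρ ∩ Pol1 σ

/-- `Pol σ` for a unary relation. -/
def PolU {k : ℕ} (σ : Set (Fin k)) : Set (Op k) :=
  {f | PreservesU f.2 σ}

/-- A clone: contains all projections and is closed under composition. -/
structure IsClone (k : ℕ) (C : Set (Op k)) : Prop where
  proj : ∀ (n : ℕ) (i : Fin n), (⟨n, fun x => x i⟩ : Op k) ∈ C
  comp : ∀ (n m : ℕ) (g : (Fin m → Fin k) → Fin k)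
      (f : Fin m → (Fin n → Fin k) → Fin k),
      (⟨m, g⟩ : Op k) ∈ C → (∀ i, (⟨n, f i⟩ : Op k) ∈ C) →
      (⟨n, fun x => g fun i => f i x⟩ : Op k) ∈ C

/-- `C` is maximal in `D`: `C ⊊ D` and no clone lies strictly between them. -/
def MaximalIn {k : ℕ} (C D : Set (Op k)) : Prop :=
  C ⊂ D ∧ ∀ E : Set (Op k), IsClone k E → ¬(C ⊂ E ∧ E ⊂ D)

/-- The clone generated by a set `F` of operations. -/
def CloneGen (k : ℕ) (F : Set (Op k)) : Set (Op k) :=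
  ⋂₀ {C : Set (Op k) | IsClone k C ∧ F ⊆ C}

/-- Totally reflexive: contains every tuple with a repeated entry. -/
def TotallyReflexive {k h : ℕ} (ρ : Set (Fin h → Fin k)) : Prop :=
  ∀ a : Fin h → Fin k, (∃ i j : Fin h, i ≠ j ∧ a i = a j) → a ∈ ρ

/-- Totally symmetric: invariant under all permutations of coordinates. -/
def TotallySymmetric {k h : ℕ} (ρ : Set (Fin h → Fin k)) : Prop :=
  ∀ a ∈ ρ, ∀ π : Equiv.Perm (Fin h), (a ∘ π) ∈ ρ

/-- The center of an `h`-ary relation: those `c` such that every tuple whose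
first coordinate is `c` belongs to the relation. -/
def Center {k h : ℕ} (ρ : Set (Fin h → Fin k)) : Set (Fin k) :=
  {c | ∀ a : Fin h → Fin k, (∀ i : Fin h, (i : ℕ) = 0 → a i = c) → a ∈ ρ}

/-- A central relation: totally reflexive, totally symmetric, with nonempty
proper center. -/
def IsCentralRel {k h : ℕ} (ρ : Set (Fin h → Fin k)) : Prop :=
  TotallyReflexive ρ ∧ TotallySymmetric ρ ∧ (Center ρ).Nonempty ∧ Center ρ ≠ Set.univ

/-- A unary central relation: a nonempty proper subset of `Fin k`. -/
def IsCentralU {k : ℕ} (σ : Set (Fin k)) : Prop :=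
  σ.Nonempty ∧ σ ≠ Set.univ

/-- `B` is a `ρ`-chain: `B^h ⊆ ρ`. -/
def RhoChain {k h : ℕ} (ρ : Set (Fin h → Fin k)) (B : Set (Fin k)) : Prop :=
  ∀ a : Fin h → Fin k, (∀ i, a i ∈ B) → a ∈ ρ

/-- A maximal `ρ`-chain. -/
def MaxRhoChain {k h : ℕ} (ρ : Set (Fin h → Fin k)) (B : Set (Fin k)) : Prop :=
  RhoChain ρ B ∧ ∀ D : Set (Fin k), RhoChain ρ D → B ⊆ D → B = D

/-- The arity-`h` tuple `(a, b, …, b)`; for `h = 2` this is the pair `(a, b)`. -/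
def pair2 {k : ℕ} (h : ℕ) (a b : Fin k) : Fin h → Fin k :=
  fun i => if (i : ℕ) = 0 then a else b

/-- Recasting an `s`-ary relation along an arity equality `s = h`. -/
def recast {k s h : ℕ} (e : s = h) (σ : Set (Fin s → Fin k)) :
    Set (Fin h → Fin k) :=
  {a | (fun i : Fin s => a (Fin.cast e i)) ∈ σ}

/-- Type I: `σ` is unary and `C_ρ ∩ σ ≠ ∅`. -/
def TypeI {k h s : ℕ} (ρ : Set (Fin h → Fin k)) (σ : Set (Fin s → Fin k)) : Prop :=
  s = 1 ∧ (Center ρ ∩ Center σ).Nonempty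

/-- Type II: `σ` unary, `h = 2`, `ρ = {(a,b) : ∃ u ∈ σ, (a,u) ∈ ρ ∧ (b,u) ∈ ρ}`,
and every maximal `ρ`-chain meets `σ`. -/
def TypeII {k h s : ℕ} (ρ : Set (Fin h → Fin k)) (σ : Set (Fin s → Fin k)) : Prop :=
  s = 1 ∧ h = 2 ∧
  (∀ a b : Fin k, pair2 h a b ∈ ρ ↔
      ∃ u ∈ Center σ, pair2 h a u ∈ ρ ∧ pair2 h b u ∈ ρ) ∧
  ∀ B : Set (Fin k), MaxRhoChain ρ B → (B ∩ Center σ).Nonempty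

/-- Type III: `s = h` and `ρ`, `σ` are comparable. -/
def TypeIII {k h s : ℕ} (ρ : Set (Fin h → Fin k)) (σ : Set (Fin s → Fin k)) : Prop :=
  ∃ e : s = h, recast e σ ⊂ ρ ∨ ρ ⊂ recast e σ

/-- Type IV: `2 ≤ s < h` and `C_ρ ∩ C_σ ≠ ∅`. -/
def TypeIV {k h s : ℕ} (ρ : Set (Fin h → Fin k)) (σ : Set (Fin s → Fin k)) : Prop :=
  2 ≤ s ∧ s < h ∧ (Center ρ ∩ Center σ).Nonempty

/-- Type V: `2 ≤ h < s` and `λ ⊊ σ`, where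
`λ = {(a_1,…,a_s) : (a_1,…,a_h) ∈ ρ}`. -/
def TypeV {k h s : ℕ} (ρ : Set (Fin h → Fin k)) (σ : Set (Fin s → Fin k)) : Prop :=
  2 ≤ h ∧ ∃ hlt : h < s,
    {a : Fin s → Fin k | (fun i : Fin h => a (Fin.castLE hlt.le i)) ∈ ρ} ⊂ σ

/-- Type I for a unary relation given as a subset of `Fin k`. -/
def TypeIU {k h : ℕ} (ρ : Set (Fin h → Fin k)) (σ : Set (Fin k)) : Prop :=
  (Center ρ ∩ σ).Nonempty

/-- Type II for a unary relation given as a subset of `Fin k`. -/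
def TypeIIU {k h : ℕ} (ρ : Set (Fin h → Fin k)) (σ : Set (Fin k)) : Prop :=
  h = 2 ∧
  (∀ a b : Fin k, pair2 h a b ∈ ρ ↔
      ∃ u ∈ σ, pair2 h a u ∈ ρ ∧ pair2 h b u ∈ ρ) ∧
  ∀ B : Set (Fin k), MaxRhoChain ρ B → (B ∩ σ).Nonempty

/-! ### Auxiliary machinery -/

attribute [local instance] Classical.propDecidable

section basic
variable {k h : ℕ} {ρ : Set (Fin h → Fin k)}

lemma mem_of_perm (hsym : TotallySymmetric ρ) (π : Equiv.Perm (Fin h))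
    {a : Fin h → Fin k} (ha : (a ∘ π) ∈ ρ) : a ∈ ρ := by
  have := hsym _ ha π⁻¹
  have e : (a ∘ ⇑π) ∘ ⇑π⁻¹ = a := by
    funext i; simp
  rwa [e] at this

lemma mem_perm_iff (hsym : TotallySymmetric ρ) (π : Equiv.Perm (Fin h))
    {a : Fin h → Fin k} : (a ∘ π) ∈ ρ ↔ a ∈ ρ :=
  ⟨mem_of_perm hsym π, fun ha => hsym _ ha π⟩

/-- Any tuple containing a central element lies in ρ. -/
lemma mem_of_center (hρ : IsCentralRel ρ) {c : Fin k} (hc : c ∈ Center ρ)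
    {a : Fin h → Fin k} {i₀ : Fin h} (hi : a i₀ = c) : a ∈ ρ := by
  rcases h.eq_zero_or_pos with rfl | hpos
  · exact absurd i₀.2 (by omega)
  set π : Equiv.Perm (Fin h) := Equiv.swap ⟨0, hpos⟩ i₀ with hπ
  apply mem_of_perm hρ.2.1 π
  apply hc
  intro i hi0
  have : i = ⟨0, hpos⟩ := by ext; simpa using hi0
  subst this
  simp [hπ, Equiv.swap_apply_left, hi]

lemma mem_of_repeat (hρ : IsCentralRel ρ) {a : Fin h → Fin k} {i j : Fin h}
    (hij : i ≠ j) (he : a i = a j) : a ∈ ρ := hρ.1 a ⟨i, j, hij, he⟩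

lemma const_mem (hρ : IsCentralRel ρ) (hh : 2 ≤ h) (v : Fin k) :
    (fun _ : Fin h => v) ∈ ρ := by
  refine mem_of_repeat hρ (i := ⟨0, by omega⟩) (j := ⟨1, by omega⟩) ?_ rfl
  intro hcon; exact absurd (congrArg Fin.val hcon) (by simp)

lemma inj_of_not_mem (hρ : IsCentralRel ρ) {a : Fin h → Fin k} (ha : a ∉ ρ) :
    Function.Injective a := by
  intro i j hij
  by_contra hne
  exact ha (mem_of_repeat hρ hne hij)

lemma rel_ne_univ (hρ : IsCentralRel ρ) : ρ ≠ Set.univ := by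
  intro he
  apply hρ.2.2.2
  ext c; simp only [Set.mem_univ, iff_true]
  intro a _; rw [he]; trivial

lemma exists_not_mem (hρ : IsCentralRel ρ) : ∃ a, a ∉ ρ := by
  by_contra hcon
  push_neg at hcon
  exact rel_ne_univ hρ (Set.eq_univ_iff_forall.2 hcon)

lemma arity_lt (hρ : IsCentralRel ρ) : h < k := by
  by_contra hle
  push_neg at hle
  obtain ⟨c, hc⟩ := hρ.2.2.1
  apply hρ.2.2.2
  ext v; simp only [Set.mem_univ, iff_true]
  intro a _
  by_cases hinj : Function.Injective a
  · have hhk : h ≤ k := by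
      simpa using Fintype.card_le_of_injective a hinj
    have hcard : h = k := le_antisymm hhk hle
    have hbij : Function.Bijective a := by
      rw [Fintype.bijective_iff_injective_and_card]
      exact ⟨hinj, by simp [hcard]⟩
    obtain ⟨i₀, hi₀⟩ := hbij.2 c
    exact mem_of_center hρ hc hi₀
  · rw [Function.not_injective_iff] at hinj
    obtain ⟨i, j, he, hne⟩ := hinj
    exact mem_of_repeat hρ hne he

/-- An injective tuple whose first entry is `c`. -/
lemma exists_inj_tuple (hhk : h ≤ k) (hk : 1 ≤ k) (c : Fin k) :
    ∃ A : Fin h → Fin k, Function.Injective A ∧ ∀ i : Fin h, (i : ℕ) = 0 → A i = c := by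
  have : NeZero k := ⟨by omega⟩
  refine ⟨fun i => c + Fin.castLE hhk i, ?_, ?_⟩
  · intro i j hij
    have := add_left_cancel hij
    exact Fin.castLE_injective hhk this
  · intro i hi
    have : Fin.castLE hhk i = 0 := by
      ext; simpa using hi
    simp only []
    rw [this, add_zero]

/-- Every ρ-chain extends to a maximal ρ-chain. -/
lemma exists_maxRhoChain {S : Set (Fin k)} (hS : RhoChain ρ S) :
    ∃ B, MaxRhoChain ρ B ∧ S ⊆ B := by
  classical
  set 𝒞 : Set (Set (Fin k)) := {D | RhoChain ρ D ∧ S ⊆ D} with h𝒞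
  have hfin : 𝒞.Finite := Set.toFinite _
  have hne : 𝒞.Nonempty := ⟨S, hS, subset_rfl⟩
  obtain ⟨B, hBm⟩ := Set.Finite.exists_maximal hfin hne
  have hB : B ∈ 𝒞 := hBm.prop
  have hmax : ∀ D ∈ 𝒞, B ≤ D → B = D := fun D hD hBD => (hBm.eq_of_ge hD hBD).symm
  refine ⟨B, ⟨hB.1, ?_⟩, hB.2⟩
  intro D hD hBD
  exact hmax D ⟨hD, hB.2.trans hBD⟩ hBD

end basic

section clone
variable {k : ℕ} {E : Set (Op k)}

lemma IsClone.comp' (hE : IsClone k E) {n m : ℕ} {G : (Fin m → Fin k) → Fin k}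
    (hG : (⟨m, G⟩ : Op k) ∈ E) (f : Fin m → (Fin n → Fin k) → Fin k)
    (hf : ∀ i, (⟨n, f i⟩ : Op k) ∈ E) {g : (Fin n → Fin k) → Fin k}
    (heq : ∀ x, G (fun i => f i x) = g x) : (⟨n, g⟩ : Op k) ∈ E := by
  have hc := hE.comp n m G f hG hf
  have : (fun x => G fun i => f i x) = g := funext heq
  rwa [this] at hc

end clone
section main2
variable {k h s : ℕ}

/-- Unified absorption lemma for the cases `2 ≤ s` (types III, IV, V):
any clone `E` between `Pol2 ρ σ` and `Pol1 ρ` containing some `f` that fails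
to preserve `σ` contains every operation preserving `ρ`. -/
lemma main2
    (hh : 2 ≤ h) (hs2 : 2 ≤ s)
    {ρ : Set (Fin h → Fin k)} {σ : Set (Fin s → Fin k)}
    (hρ : IsCentralRel ρ) (hσ : IsCentralRel σ)
    {c : Fin k} (hcρ : c ∈ Center ρ) (hcσ : c ∈ Center σ)
    (Safe : ∀ {n : ℕ}, (Fin s → Fin n → Fin k) → Prop)
    (hS1 : ∀ {n : ℕ} (g : (Fin n → Fin k) → Fin k), Preserves g ρ →
      ∀ X : Fin s → Fin n → Fin k, (∀ i, (fun j => X j i) ∈ σ) → Safe X →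
      (fun j => g (X j)) ∈ σ)
    (hS2 : ∀ {n : ℕ} (D : Fin s → Fin n → Fin k), (∀ i, (fun j => D j i) ∈ σ) →
      ¬ Safe D → ∀ jm : Fin h → Fin s, Function.Injective jm →
      (∀ i, (fun t => D (jm t) i) ∈ ρ) →
      ∀ col : Fin s → Fin k, col ∈ σ → (fun t => col (jm t)) ∈ ρ)
    {E : Set (Op k)} (hE : IsClone k E) (hP2E : Pol2 ρ σ ⊆ E)
    {n₀ : ℕ} {f : (Fin n₀ → Fin k) → Fin k} (hfE : (⟨n₀, f⟩ : Op k) ∈ E)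
    (hfσ : ¬ Preserves f σ)
    {n : ℕ} {g : (Fin n → Fin k) → Fin k} (hg : Preserves g ρ) :
    (⟨n, g⟩ : Op k) ∈ E := by
  classical
  simp only [Preserves, not_forall] at hfσ
  obtain ⟨M, hMcols, hB⟩ := hfσ
  set B : Fin s → Fin k := fun j => f (M j) with hBdef
  have hBinj : Function.Injective B := inj_of_not_mem hσ hB
  -- the set of "dangerous" matrices
  set P : (Fin s → Fin n → Fin k) → Prop :=
    fun D => (∀ i, (fun j => D j i) ∈ σ) ∧ Function.Injective D ∧ ¬ Safe D with hPdef
  -- the detector translators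
  set θ : (Fin s → Fin n → Fin k) → Fin n₀ → (Fin n → Fin k) → Fin k :=
    fun D i z => if hz : ∃ j, D j = z then M (Classical.choose hz) i else c with hθdef
  have θpos : ∀ D (i : Fin n₀) (z : Fin n → Fin k) (hz : ∃ j, D j = z),
      θ D i z = M (Classical.choose hz) i := by
    intro D i z hz; simp only [hθdef, dif_pos hz]
  have θneg : ∀ D (i : Fin n₀) (z : Fin n → Fin k), (¬ ∃ j, D j = z) →
      θ D i z = c := by
    intro D i z hz; simp only [hθdef, dif_neg hz]
  have θmatch : ∀ D, Function.Injective D → ∀ (i : Fin n₀) (j : Fin s),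
      θ D i (D j) = M j i := by
    intro D hD i j
    have hz : ∃ j', D j' = D j := ⟨j, rfl⟩
    rw [θpos D i (D j) hz]
    have := Classical.choose_spec hz
    rw [hD this]
  -- θ D i preserves σ (for any D)
  have hθσ : ∀ D (i : Fin n₀), Preserves (θ D i) σ := by
    intro D i a hacols
    by_cases hall : ∀ t, ∃ j, D j = a t
    · have hval : ∀ t, θ D i (a t) = M (Classical.choose (hall t)) i :=
        fun t => θpos D i (a t) (hall t)
      set jm : Fin s → Fin s := fun t => Classical.choose (hall t) with hjm
      by_cases hinj : Function.Injective jm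
      · have hbij : Function.Bijective jm := Finite.injective_iff_bijective.1 hinj
        set π : Equiv.Perm (Fin s) := Equiv.ofBijective jm hbij with hπ
        have : (fun t => θ D i (a t)) = (fun j => M j i) ∘ π := by
          funext t
          simp [hval t, hπ, Equiv.ofBijective_apply, hjm]
        rw [this]
        exact hσ.2.1 _ (hMcols i) π
      · rw [Function.not_injective_iff] at hinj
        obtain ⟨t, t', he, hne⟩ := hinj
        refine mem_of_repeat hσ hne ?_
        simp only [hval t, hval t']
        rw [show Classical.choose (hall t) = jm t from rfl,
            show Classical.choose (hall t') = jm t' from rfl, he]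
    · push_neg at hall
      obtain ⟨t₀, ht₀⟩ := hall
      refine mem_of_center hσ hcσ (i₀ := t₀) ?_
      exact θneg D i (a t₀) (by push_neg; exact ht₀)
  -- θ D i preserves ρ (for dangerous D)
  have hθρ : ∀ D, P D → ∀ (i : Fin n₀), Preserves (θ D i) ρ := by
    intro D hPD i a hacols
    by_cases hall : ∀ t, ∃ j, D j = a t
    · have hval : ∀ t, θ D i (a t) = M (Classical.choose (hall t)) i :=
        fun t => θpos D i (a t) (hall t)
      set jm : Fin h → Fin s := fun t => Classical.choose (hall t) with hjm
      have hjspec : ∀ t, D (jm t) = a t := fun t => Classical.choose_spec (hall t)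
      by_cases hinj : Function.Injective jm
      · have hcols' : ∀ i', (fun t => D (jm t) i') ∈ ρ := by
          intro i'
          have : (fun t => D (jm t) i') = fun t => a t i' := by
            funext t; rw [hjspec t]
          rw [this]
          exact hacols i'
        have := hS2 D hPD.1 hPD.2.2 jm hinj hcols' (fun j => M j i) (hMcols i)
        have heq : (fun t => θ D i (a t)) = fun t => M (jm t) i := by
          funext t; exact hval t
        rw [heq]; exact this
      · rw [Function.not_injective_iff] at hinj
        obtain ⟨t, t', he, hne⟩ := hinj
        refine mem_of_repeat hρ hne ?_
        simp only [hval t, hval t']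
        rw [show Classical.choose (hall t) = jm t from rfl,
            show Classical.choose (hall t') = jm t' from rfl, he]
    · push_neg at hall
      obtain ⟨t₀, ht₀⟩ := hall
      refine mem_of_center hρ hcρ (i₀ := t₀) ?_
      exact θneg D i (a t₀) (by push_neg; exact ht₀)
  -- index the dangerous matrices
  have : Fintype {D : Fin s → Fin n → Fin k // P D} := Fintype.ofFinite _
  set m : ℕ := Fintype.card {D : Fin s → Fin n → Fin k // P D} with hm
  set e : {D : Fin s → Fin n → Fin k // P D} ≃ Fin m := Fintype.equivFin _ with he
  set xpart : (Fin (n + m) → Fin k) → (Fin n → Fin k) :=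
    fun y i => y (Fin.castAdd m i) with hxpart
  set G : (Fin (n + m) → Fin k) → Fin k := fun y =>
    if (∀ Dp : {D : Fin s → Fin n → Fin k // P D},
        y (Fin.natAdd n (e Dp)) = f (fun i => θ Dp.1 i (xpart y)))
    then g (xpart y) else c with hGdef
  have hGρ : Preserves G ρ := by
    intro a hacols
    by_cases hall : ∀ t, ∀ Dp : {D : Fin s → Fin n → Fin k // P D},
        (a t) (Fin.natAdd n (e Dp)) = f (fun i => θ Dp.1 i (xpart (a t)))
    · have hval : (fun t => G (a t)) = fun t => g (xpart (a t)) := by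
        funext t; simp only [hGdef, if_pos (hall t)]
      rw [hval]
      apply hg
      intro i
      exact hacols (Fin.castAdd m i)
    · push_neg at hall
      obtain ⟨t₀, ht₀⟩ := hall
      refine mem_of_center hρ hcρ (i₀ := t₀) ?_
      simp only [hGdef]
      rw [if_neg (by push_neg; exact ht₀)]
  have hGσ : Preserves G σ := by
    intro a hacols
    by_cases hall : ∀ t, ∀ Dp : {D : Fin s → Fin n → Fin k // P D},
        (a t) (Fin.natAdd n (e Dp)) = f (fun i => θ Dp.1 i (xpart (a t)))
    · have hval : (fun t => G (a t)) = fun t => g (xpart (a t)) := by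
        funext t; simp only [hGdef, if_pos (hall t)]
      rw [hval]
      set X : Fin s → Fin n → Fin k := fun t => xpart (a t) with hX
      have hXcols : ∀ i, (fun j => X j i) ∈ σ := fun i => hacols (Fin.castAdd m i)
      by_cases hinj : Function.Injective X
      · by_cases hsafe : Safe X
        · exact hS1 g hg X hXcols hsafe
        · exfalso
          have hPX : P X := ⟨hXcols, hinj, hsafe⟩
          have hcolB : (fun t => a t (Fin.natAdd n (e ⟨X, hPX⟩))) = B := by
            funext t
            rw [hall t ⟨X, hPX⟩]
            have : (fun i => θ X i (xpart (a t))) = M t := by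
              funext i
              exact θmatch X hinj i t
            rw [this]
          have := hacols (Fin.natAdd n (e ⟨X, hPX⟩))
          rw [hcolB] at this
          exact hB this
      · rw [Function.not_injective_iff] at hinj
        obtain ⟨t, t', he', hne⟩ := hinj
        exact mem_of_repeat hσ hne (congrArg g he')
    · push_neg at hall
      obtain ⟨t₀, ht₀⟩ := hall
      refine mem_of_center hσ hcσ (i₀ := t₀) ?_
      simp only [hGdef]
      rw [if_neg (by push_neg; exact ht₀)]
  have hGE : (⟨n + m, G⟩ : Op k) ∈ E := hP2E ⟨hGρ, hGσ⟩
  -- the composed arguments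
  set fF : Fin (n + m) → (Fin n → Fin k) → Fin k :=
    Fin.addCases (fun i x => x i) (fun q x => f (fun i => θ (e.symm q).1 i x)) with hfF
  have hfFmem : ∀ i, (⟨n, fF i⟩ : Op k) ∈ E := by
    intro i
    refine Fin.addCases (motive := fun i => (⟨n, fF i⟩ : Op k) ∈ E) ?_ ?_ i
    · intro i'
      have : fF (Fin.castAdd m i') = fun x => x i' := by
        simp only [hfF]; rw [Fin.addCases_left]
      rw [this]
      exact hE.proj n i'
    · intro q
      have : fF (Fin.natAdd n q) = fun x => f (fun i => θ (e.symm q).1 i x) := by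
        simp only [hfF]; rw [Fin.addCases_right]
      rw [this]
      exact hE.comp n n₀ f (fun i => θ (e.symm q).1 i) hfE
        (fun i => hP2E ⟨hθρ _ (e.symm q).2 i, hθσ _ i⟩)
  refine hE.comp' hGE fF hfFmem ?_
  intro x
  have hxp : xpart (fun i => fF i x) = x := by
    funext i
    simp only [hxpart, hfF]
    rw [Fin.addCases_left]
  have hcond : ∀ Dp : {D : Fin s → Fin n → Fin k // P D},
      (fun i => fF i x) (Fin.natAdd n (e Dp))
        = f (fun i => θ Dp.1 i (xpart (fun i => fF i x))) := by
    intro Dp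
    simp only [hfF]
    rw [Fin.addCases_right, hxp, Equiv.symm_apply_apply]
  simp only [hGdef]
  rw [if_pos hcond, hxp]

end main2
section perm
variable {α β : Type*} [Fintype α] [Fintype β] [DecidableEq α] [DecidableEq β]

/-- Two injections with the same finite domain differ by a permutation of the codomain. -/
lemma exists_perm_comp {f g : α → β} (hf : Function.Injective f)
    (hg : Function.Injective g) : ∃ π : Equiv.Perm β, ∀ a, π (f a) = g a := by
  classical
  have hcard : Fintype.card ((Set.range f)ᶜ : Set β) =
      Fintype.card ((Set.range g)ᶜ : Set β) := by
    rw [Fintype.card_compl_set, Fintype.card_compl_set,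
      Set.card_range_of_injective hf, Set.card_range_of_injective hg]
  set φ : ((Set.range f)ᶜ : Set β) ≃ ((Set.range g)ᶜ : Set β) :=
    Fintype.equivOfCardEq hcard with hφ
  set e1 : α ≃ Set.range f := Equiv.ofInjective f hf with he1
  set e2 : α ≃ Set.range g := Equiv.ofInjective g hg with he2
  refine ⟨((Equiv.Set.sumCompl (Set.range f)).symm.trans
    ((Equiv.sumCongr (e1.symm.trans e2) φ).trans (Equiv.Set.sumCompl (Set.range g)))), ?_⟩
  intro a
  have hmem : f a ∈ Set.range f := ⟨a, rfl⟩
  have h1 : (Equiv.Set.sumCompl (Set.range f)).symm (f a) =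
      Sum.inl (⟨f a, hmem⟩ : Set.range f) :=
    Equiv.Set.sumCompl_symm_apply_of_mem hmem
  simp only [Equiv.trans_apply, h1, Equiv.sumCongr_apply, Sum.map_inl]
  have h2 : e1.symm ⟨f a, hmem⟩ = a := by
    have : (⟨f a, hmem⟩ : Set.range f) = e1 a := by
      simp [he1, Equiv.ofInjective_apply]
    rw [this, Equiv.symm_apply_apply]
  simp only [Equiv.trans_apply, h2]
  simp [he2, Equiv.ofInjective_apply]

end perm

section transfer
variable {k h s : ℕ}

lemma center_mono {σ₁ σ₂ : Set (Fin h → Fin k)} (hsub : σ₁ ⊆ σ₂) :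
    Center σ₁ ⊆ Center σ₂ := fun _ hc a ha => hsub (hc a ha)

/-- In type V, the center of ρ is contained in the center of σ. -/
lemma center_V {ρ : Set (Fin h → Fin k)} {σ : Set (Fin s → Fin k)} (hle : h ≤ s)
    (hlam : {a : Fin s → Fin k | (fun t : Fin h => a (Fin.castLE hle t)) ∈ ρ} ⊆ σ) :
    Center ρ ⊆ Center σ := by
  intro c hc a ha
  apply hlam
  apply hc
  intro t ht
  exact ha _ (by simpa using ht)

/-- In type V, a tuple with an injectively-indexed ρ-subtuple lies in σ. -/
lemma subtuple_mem {ρ : Set (Fin h → Fin k)} {σ : Set (Fin s → Fin k)}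
    (hσ : IsCentralRel σ) (hle : h ≤ s)
    (hlam : {a : Fin s → Fin k | (fun t : Fin h => a (Fin.castLE hle t)) ∈ ρ} ⊆ σ)
    {b : Fin s → Fin k} {ι : Fin h → Fin s} (hι : Function.Injective ι)
    (hbι : (fun t => b (ι t)) ∈ ρ) : b ∈ σ := by
  obtain ⟨π, hπ⟩ := exists_perm_comp (Fin.castLE_injective hle) hι
  apply mem_of_perm hσ.2.1 π
  apply hlam
  show (fun t : Fin h => (b ∘ π) (Fin.castLE hle t)) ∈ ρ
  have : (fun t : Fin h => (b ∘ π) (Fin.castLE hle t)) = fun t => b (ι t) := by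
    funext t
    simp only [Function.comp_apply, hπ t]
  rw [this]
  exact hbι

/-- `Center σ` for a unary `σ`. -/
lemma center_one {σ : Set (Fin 1 → Fin k)} {c : Fin k} :
    c ∈ Center σ ↔ (fun _ : Fin 1 => c) ∈ σ := by
  constructor
  · intro hc
    exact hc _ (fun i _ => rfl)
  · intro hc a ha
    have : a = fun _ : Fin 1 => c := by
      funext i
      have : i = 0 := Subsingleton.elim _ _
      rw [this]
      exact ha 0 rfl
    rwa [this]

end transfer

section witness
variable {k h s : ℕ} {ρ : Set (Fin h → Fin k)} {σ : Set (Fin s → Fin k)}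

/-- Generic construction of an operation in `Pol ρ \ Pol σ`. -/
lemma witness_op (hρ : IsCentralRel ρ) (hσ : IsCentralRel σ)
    {c : Fin k} (hcρ : c ∈ Center ρ) {n' : ℕ}
    (A : Fin s → Fin n' → Fin k) (hAinj : Function.Injective A)
    (hAcols : ∀ q, (fun p => A p q) ∈ σ)
    (T : Fin s → Fin k) (hT : T ∉ σ)
    (hkey : ∀ jm : Fin h → Fin s, Function.Injective jm →
      (∀ q, (fun t => A (jm t) q) ∈ ρ) → (fun t => T (jm t)) ∈ ρ) :
    ∃ F : Op k, F ∈ Pol1 ρ ∧ ¬ Preserves F.2 σ := by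
  classical
  set u : (Fin n' → Fin k) → Fin k :=
    fun z => if hz : ∃ p, A p = z then T (Classical.choose hz) else c with hu
  have upos : ∀ (z : Fin n' → Fin k) (hz : ∃ p, A p = z),
      u z = T (Classical.choose hz) := fun z hz => dif_pos hz
  have umatch : ∀ p, u (A p) = T p := by
    intro p
    have hz : ∃ p', A p' = A p := ⟨p, rfl⟩
    rw [upos (A p) hz]
    congr 1
    exact hAinj (Classical.choose_spec hz)
  refine ⟨⟨n', u⟩, ?_, ?_⟩
  · -- u preserves ρ
    intro a hacols
    by_cases hall : ∀ t, ∃ p, A p = a t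
    · set jm : Fin h → Fin s := fun t => Classical.choose (hall t) with hjm
      have hjspec : ∀ t, A (jm t) = a t := fun t => Classical.choose_spec (hall t)
      have hval : (fun t => u (a t)) = fun t => T (jm t) := by
        funext t
        exact upos (a t) (hall t)
      rw [hval]
      by_cases hinj : Function.Injective jm
      · apply hkey jm hinj
        intro q
        have : (fun t => A (jm t) q) = fun t => a t q := by
          funext t; rw [hjspec t]
        rw [this]
        exact hacols q
      · rw [Function.not_injective_iff] at hinj
        obtain ⟨t, t', he, hne⟩ := hinj
        exact mem_of_repeat hρ hne (by rw [he])
    · push_neg at hall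
      obtain ⟨t₀, ht₀⟩ := hall
      refine mem_of_center hρ hcρ (i₀ := t₀) ?_
      exact dif_neg (by push_neg; exact ht₀)
  · -- u does not preserve σ
    intro hpres
    have := hpres (fun p q => A p q) (fun q => hAcols q)
    have heq : (fun p => u (fun q => A p q)) = T := by
      funext p
      exact umatch p
    rw [heq] at this
    exact hT this

end witness
section unary
variable {k h n : ℕ}

/-- Preservation of a unary relation, elementwise form. -/
lemma preserves_one_iff {σ : Set (Fin 1 → Fin k)} {f : (Fin n → Fin k) → Fin k} :
    Preserves f σ ↔ ∀ x : Fin n → Fin k, (∀ i, x i ∈ Center σ) → f x ∈ Center σ := by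
  constructor
  · intro hp x hx
    rw [center_one]
    have := hp (fun _ => x) (fun i => by
      have : (fun j : Fin 1 => x i) ∈ σ := center_one.1 (hx i)
      exact this)
    exact this
  · intro hp a ha
    have hx : ∀ i, a 0 i ∈ Center σ := by
      intro i
      rw [center_one]
      have := ha i
      have he : (fun j : Fin 1 => a j i) = fun _ : Fin 1 => a 0 i := by
        funext j; rw [Subsingleton.elim j 0]
      rwa [he] at this
    have := hp (a 0) hx
    rw [center_one] at this
    have he : (fun j : Fin 1 => f (a j)) = fun _ : Fin 1 => f (a 0) := by
      funext j; rw [Subsingleton.elim j 0]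
    rwa [he]

lemma pres_const {ρ : Set (Fin h → Fin k)} (hρ : IsCentralRel ρ) (hh : 2 ≤ h)
    (v : Fin k) : Preserves (fun _ : Fin n → Fin k => v) ρ :=
  fun _ _ => const_mem hρ hh v

/-- Constants with value `b = f xh` (for a `σ`-violating `f ∈ E`) lie in `E`. -/
lemma const_in_E {ρ : Set (Fin h → Fin k)} {σ : Set (Fin 1 → Fin k)}
    (hρ : IsCentralRel ρ) (hh : 2 ≤ h)
    {E : Set (Op k)} (hE : IsClone k E) (hP2E : Pol2 ρ σ ⊆ E)
    {n₀ : ℕ} {f : (Fin n₀ → Fin k) → Fin k} (hfE : (⟨n₀, f⟩ : Op k) ∈ E)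
    {xh : Fin n₀ → Fin k} (hxh : ∀ i, xh i ∈ Center σ) (m : ℕ) :
    (⟨m, fun _ => f xh⟩ : Op k) ∈ E := by
  refine hE.comp' hfE (fun i _ => xh i) ?_ ?_
  · intro i
    refine hP2E ⟨pres_const hρ hh (xh i), ?_⟩
    show Preserves _ σ
    rw [preserves_one_iff]
    intro x _
    exact hxh i
  · intro x
    rfl

end unary

section pair
variable {k : ℕ} {ρ : Set (Fin 2 → Fin k)}

lemma pair2_zero (a b : Fin k) : pair2 2 a b 0 = a := rfl

lemma pair2_one (a b : Fin k) : pair2 2 a b 1 = b := rfl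

lemma eq_pair2 (a : Fin 2 → Fin k) : a = pair2 2 (a 0) (a 1) := by
  funext i
  fin_cases i <;> rfl

lemma pair_refl (hρ : IsCentralRel ρ) (a : Fin k) : pair2 2 a a ∈ ρ :=
  mem_of_repeat hρ (i := 0) (j := 1) (by decide) rfl

lemma pair_symm (hρ : IsCentralRel ρ) {a b : Fin k} (hab : pair2 2 a b ∈ ρ) :
    pair2 2 b a ∈ ρ := by
  have := hρ.2.1 _ hab (Equiv.swap 0 1)
  have he : (pair2 2 a b) ∘ (Equiv.swap (0 : Fin 2) 1) = pair2 2 b a := by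
    funext i
    fin_cases i <;> simp [pair2, Equiv.swap_apply_left, Equiv.swap_apply_right]
  rwa [he] at this

lemma mem_iff_pair (a : Fin 2 → Fin k) : a ∈ ρ ↔ pair2 2 (a 0) (a 1) ∈ ρ := by
  conv_lhs => rw [eq_pair2 a]

end pair

section typeI
variable {k h : ℕ}

/-- Absorption for type I. -/
lemma absorbI (hh : 2 ≤ h) {ρ : Set (Fin h → Fin k)} {σ : Set (Fin 1 → Fin k)}
    (hρ : IsCentralRel ρ) {c : Fin k} (hcρ : c ∈ Center ρ) (hcσ : c ∈ Center σ)
    {E : Set (Op k)} (hE : IsClone k E) (hP2E : Pol2 ρ σ ⊆ E)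
    {n₀ : ℕ} {f : (Fin n₀ → Fin k) → Fin k} (hfE : (⟨n₀, f⟩ : Op k) ∈ E)
    (hfσ : ¬ Preserves f σ)
    {n : ℕ} {g : (Fin n → Fin k) → Fin k} (hg : Preserves g ρ) :
    (⟨n, g⟩ : Op k) ∈ E := by
  classical
  rw [preserves_one_iff] at hfσ
  push_neg at hfσ
  obtain ⟨xh, hxh, hb⟩ := hfσ
  set b : Fin k := f xh with hbdef
  have hbE : (⟨n, fun _ => b⟩ : Op k) ∈ E := const_in_E hρ hh hE hP2E hfE hxh n
  set G : (Fin (n + 1) → Fin k) → Fin k := fun y =>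
    if y (Fin.natAdd n 0) = b then g (fun i => y (Fin.castAdd 1 i)) else c with hGdef
  have hGρ : Preserves G ρ := by
    intro a hacols
    by_cases hall : ∀ t, a t (Fin.natAdd n 0) = b
    · have hval : (fun t => G (a t)) = fun t => g (fun i => a t (Fin.castAdd 1 i)) := by
        funext t; simp only [hGdef, if_pos (hall t)]
      rw [hval]
      exact hg _ (fun i => hacols (Fin.castAdd 1 i))
    · push_neg at hall
      obtain ⟨t₀, ht₀⟩ := hall
      refine mem_of_center hρ hcρ (i₀ := t₀) ?_
      simp only [hGdef, if_neg ht₀]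
  have hGσ : Preserves G σ := by
    rw [preserves_one_iff]
    intro y hy
    have hne : y (Fin.natAdd n 0) ≠ b := by
      intro he
      exact hb (he ▸ hy (Fin.natAdd n 0))
    simp only [hGdef, if_neg hne]
    exact hcσ
  have hGE : (⟨n + 1, G⟩ : Op k) ∈ E := hP2E ⟨hGρ, hGσ⟩
  set fF : Fin (n + 1) → (Fin n → Fin k) → Fin k :=
    Fin.addCases (fun i x => x i) (fun _ _ => b) with hfF
  have hfFmem : ∀ i, (⟨n, fF i⟩ : Op k) ∈ E := by
    intro i
    refine Fin.addCases (motive := fun i => (⟨n, fF i⟩ : Op k) ∈ E) ?_ ?_ i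
    · intro i'
      have : fF (Fin.castAdd 1 i') = fun x => x i' := by
        simp only [hfF]; rw [Fin.addCases_left]
      rw [this]
      exact hE.proj n i'
    · intro q
      have : fF (Fin.natAdd n q) = fun _ => b := by
        simp only [hfF]; rw [Fin.addCases_right]
      rw [this]
      exact hbE
  refine hE.comp' hGE fF hfFmem ?_
  intro x
  have h1 : (fun i => fF i x) (Fin.natAdd n 0) = b := by
    simp only [hfF]; rw [Fin.addCases_right]
  have h2 : (fun i : Fin n => (fun i => fF i x) (Fin.castAdd 1 i)) = x := by
    funext i; simp only [hfF]; rw [Fin.addCases_left]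
  simp only [hGdef]
  rw [if_pos h1, h2]

end typeI
section typeII
variable {k : ℕ}

/-- Absorption for type II. -/
lemma absorbII {ρ : Set (Fin 2 → Fin k)} {σ : Set (Fin 1 → Fin k)}
    (hρ : IsCentralRel ρ)
    (hiff : ∀ a b : Fin k, pair2 2 a b ∈ ρ ↔
      ∃ u ∈ Center σ, pair2 2 a u ∈ ρ ∧ pair2 2 b u ∈ ρ)
    (hchain : ∀ B : Set (Fin k), MaxRhoChain ρ B → (B ∩ Center σ).Nonempty)
    {E : Set (Op k)} (hE : IsClone k E) (hP2E : Pol2 ρ σ ⊆ E)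
    {n₀ : ℕ} {f : (Fin n₀ → Fin k) → Fin k} (hfE : (⟨n₀, f⟩ : Op k) ∈ E)
    (hfσ : ¬ Preserves f σ)
    {n : ℕ} {g : (Fin n → Fin k) → Fin k} (hg : Preserves g ρ) :
    (⟨n, g⟩ : Op k) ∈ E := by
  classical
  rw [preserves_one_iff] at hfσ
  push_neg at hfσ
  obtain ⟨xh, hxh, hb⟩ := hfσ
  set b : Fin k := f xh with hbdef
  have hbE : (⟨n, fun _ => b⟩ : Op k) ∈ E := const_in_E hρ (by norm_num) hE hP2E hfE hxh n
  -- the bad set of an operation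
  set Bad : ((Fin n → Fin k) → Fin k) → Finset (Fin n → Fin k) := fun g' =>
    Finset.univ.filter (fun x => (∀ i, x i ∈ Center σ) ∧ g' x ∉ Center σ) with hBad
  suffices hind : ∀ (N : ℕ) (g' : (Fin n → Fin k) → Fin k), Preserves g' ρ →
      (Bad g').card ≤ N → (⟨n, g'⟩ : Op k) ∈ E by
    exact hind (Bad g).card g hg le_rfl
  intro N
  induction N with
  | zero =>
    intro g' hg' hcard
    refine hP2E ⟨hg', ?_⟩
    show Preserves g' σ
    rw [preserves_one_iff]
    intro x hx
    by_contra hgx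
    have : x ∈ Bad g' := by
      simp only [hBad, Finset.mem_filter, Finset.mem_univ, true_and]
      exact ⟨hx, hgx⟩
    have := Finset.card_pos.2 ⟨x, this⟩
    omega
  | succ N ih =>
    intro g' hg' hcard
    by_cases hempty : Bad g' = ∅
    · exact ih g' hg' (by rw [hempty]; simp)
    · obtain ⟨x₀, hx₀⟩ := Finset.nonempty_of_ne_empty hempty
      simp only [hBad, Finset.mem_filter, Finset.mem_univ, true_and] at hx₀
      obtain ⟨hx₀σ, hβ⟩ := hx₀
      set β : Fin k := g' x₀ with hβdef
      -- the image of the coordinatewise neighbourhood of x₀ is a ρ-chain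
      set S : Set (Fin k) :=
        {v | ∃ x', (∀ i, pair2 2 (x' i) (x₀ i) ∈ ρ) ∧ g' x' = v} with hS
      have hpairS : ∀ v w, v ∈ S → w ∈ S → pair2 2 v w ∈ ρ := by
        rintro v w ⟨x', hx', rfl⟩ ⟨x'', hx'', rfl⟩
        set mat : Fin 2 → Fin n → Fin k := fun j => if j = 0 then x' else x'' with hmat
        have hcols : ∀ i, (fun j => mat j i) ∈ ρ := by
          intro i
          have : (fun j => mat j i) = pair2 2 (x' i) (x'' i) := by
            funext j; fin_cases j <;> simp [hmat, pair2]
          rw [this, hiff]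
          exact ⟨x₀ i, hx₀σ i, hx' i, hx'' i⟩
        have := hg' mat hcols
        have he : (fun j => g' (mat j)) = pair2 2 (g' x') (g' x'') := by
          funext j; fin_cases j <;> simp [hmat, pair2]
        rwa [he] at this
      have hSchain : RhoChain ρ S := by
        intro a ha
        rw [mem_iff_pair]
        exact hpairS _ _ (ha 0) (ha 1)
      obtain ⟨B, hBmax, hSB⟩ := exists_maxRhoChain hSchain
      obtain ⟨v₀, hv₀B, hv₀σ⟩ := hchain B hBmax
      have hv₀S : ∀ w ∈ S, pair2 2 v₀ w ∈ ρ := by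
        intro w hw
        apply hBmax.1
        intro i
        fin_cases i
        · exact hv₀B
        · exact hSB hw
      have hβS : β ∈ S := ⟨x₀, fun i => pair_refl hρ _, rfl⟩
      -- the corrected operation
      set g'' : (Fin n → Fin k) → Fin k := Function.update g' x₀ v₀ with hg''
      have hg''ρ : Preserves g'' ρ := by
        intro mat hcols
        have hcol' : ∀ i, pair2 2 (mat 0 i) (mat 1 i) ∈ ρ := by
          intro i
          have := hcols i
          rwa [mem_iff_pair] at this
        rw [mem_iff_pair]
        show pair2 2 (g'' (mat 0)) (g'' (mat 1)) ∈ ρ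
        have hS0 : mat 1 = x₀ → g' (mat 0) ∈ S := by
          intro hm1
          exact ⟨mat 0, fun i => by rw [← hm1]; exact hcol' i, rfl⟩
        have hS1 : mat 0 = x₀ → g' (mat 1) ∈ S := by
          intro hm0
          refine ⟨mat 1, fun i => ?_, rfl⟩
          rw [← hm0]
          exact pair_symm hρ (hcol' i)
        by_cases h0 : mat 0 = x₀ <;> by_cases h1 : mat 1 = x₀
        · simp only [hg'', h0, h1, Function.update_self]
          exact pair_refl hρ v₀
        · simp only [hg'', h0, Function.update_self, Function.update_of_ne h1]
          exact hv₀S _ (hS1 h0)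
        · simp only [hg'', h1, Function.update_self, Function.update_of_ne h0]
          exact pair_symm hρ (hv₀S _ (hS0 h1))
        · simp only [hg'', Function.update_of_ne h0, Function.update_of_ne h1]
          have := hg' mat hcols
          rw [mem_iff_pair] at this
          exact this
      have hBadss : Bad g'' ⊆ (Bad g').erase x₀ := by
        intro x hx
        simp only [hBad, Finset.mem_filter, Finset.mem_univ, true_and] at hx
        obtain ⟨hx1, hx2⟩ := hx
        have hne : x ≠ x₀ := by
          intro he
          apply hx2
          rw [he]
          simp only [hg'', Function.update_self]
          exact hv₀σ
        rw [Finset.mem_erase]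
        refine ⟨hne, ?_⟩
        simp only [hBad, Finset.mem_filter, Finset.mem_univ, true_and]
        refine ⟨hx1, ?_⟩
        simpa only [hg'', Function.update_of_ne hne] using hx2
      have hx₀Bad : x₀ ∈ Bad g' := by
        simp only [hBad, Finset.mem_filter, Finset.mem_univ, true_and]
        exact ⟨hx₀σ, hβ⟩
      have hcard'' : (Bad g'').card ≤ N := by
        have h1 := Finset.card_le_card hBadss
        have h2 : ((Bad g').erase x₀).card = (Bad g').card - 1 :=
          Finset.card_erase_of_mem hx₀Bad
        have h3 : 1 ≤ (Bad g').card := Finset.card_pos.2 ⟨x₀, hx₀Bad⟩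
        omega
      have hg''E : (⟨n, g''⟩ : Op k) ∈ E := ih g'' hg''ρ hcard''
      -- the merge operation
      set H : (Fin (n + 2) → Fin k) → Fin k := fun y =>
        if y (Fin.natAdd n 0) = v₀ ∧ y (Fin.natAdd n 1) ∉ Center σ ∧
            (fun i => y (Fin.castAdd 2 i)) = x₀
        then β else y (Fin.natAdd n 0) with hH
      have hHσ : Preserves H σ := by
        rw [preserves_one_iff]
        intro y hy
        have hcf : ¬ (y (Fin.natAdd n 0) = v₀ ∧ y (Fin.natAdd n 1) ∉ Center σ ∧
            (fun i => y (Fin.castAdd 2 i)) = x₀) := by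
          rintro ⟨-, hmid, -⟩
          exact hmid (hy _)
        simp only [hH, if_neg hcf]
        exact hy _
      have hHρ : Preserves H ρ := by
        intro mat hcols
        rw [mem_iff_pair]
        show pair2 2 (H (mat 0)) (H (mat 1)) ∈ ρ
        have hzcol : pair2 2 (mat 0 (Fin.natAdd n 0)) (mat 1 (Fin.natAdd n 0)) ∈ ρ := by
          have := hcols (Fin.natAdd n 0)
          rwa [mem_iff_pair] at this
        have hβv₀ : pair2 2 β v₀ ∈ ρ := pair_symm hρ (hv₀S β hβS)
        by_cases c0 : mat 0 (Fin.natAdd n 0) = v₀ ∧ mat 0 (Fin.natAdd n 1) ∉ Center σ ∧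
            (fun i => mat 0 (Fin.castAdd 2 i)) = x₀
          <;> by_cases c1 : mat 1 (Fin.natAdd n 0) = v₀ ∧ mat 1 (Fin.natAdd n 1) ∉ Center σ ∧
            (fun i => mat 1 (Fin.castAdd 2 i)) = x₀
        · simp only [hH, if_pos c0, if_pos c1]
          exact pair_refl hρ β
        · simp only [hH, if_pos c0, if_neg c1]
          rw [hiff]
          refine ⟨v₀, hv₀σ, hβv₀, ?_⟩
          rw [← c0.1]
          exact pair_symm hρ hzcol
        · simp only [hH, if_neg c0, if_pos c1]
          rw [hiff]
          refine ⟨v₀, hv₀σ, ?_, hβv₀⟩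
          rw [← c1.1]
          exact hzcol
        · simp only [hH, if_neg c0, if_neg c1]
          exact hzcol
      have hHE : (⟨n + 2, H⟩ : Op k) ∈ E := hP2E ⟨hHρ, hHσ⟩
      set fF : Fin (n + 2) → (Fin n → Fin k) → Fin k :=
        Fin.addCases (fun i x => x i) (fun q x => if (q : ℕ) = 0 then g'' x else b) with hfF
      have hfFmem : ∀ i, (⟨n, fF i⟩ : Op k) ∈ E := by
        intro i
        refine Fin.addCases (motive := fun i => (⟨n, fF i⟩ : Op k) ∈ E) ?_ ?_ i
        · intro i'
          have : fF (Fin.castAdd 2 i') = fun x => x i' := by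
            simp only [hfF]; rw [Fin.addCases_left]
          rw [this]
          exact hE.proj n i'
        · intro q
          have : fF (Fin.natAdd n q) = fun x => if (q : ℕ) = 0 then g'' x else b := by
            simp only [hfF]; rw [Fin.addCases_right]
          rw [this]
          by_cases hq : (q : ℕ) = 0
          · simp only [if_pos hq]
            exact hg''E
          · simp only [if_neg hq]
            exact hbE
      refine hE.comp' hHE fF hfFmem ?_
      intro x
      have e0 : (fun i => fF i x) (Fin.natAdd n 0) = g'' x := by
        simp only [hfF]; rw [Fin.addCases_right]; norm_num
      have e1 : (fun i => fF i x) (Fin.natAdd n 1) = b := by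
        simp only [hfF]; rw [Fin.addCases_right]; norm_num
      have e2 : (fun i : Fin n => (fun i => fF i x) (Fin.castAdd 2 i)) = x := by
        funext i; simp only [hfF]; rw [Fin.addCases_left]
      by_cases hx : x = x₀
      · have hcond : (fun i => fF i x) (Fin.natAdd n 0) = v₀ ∧
            (fun i => fF i x) (Fin.natAdd n 1) ∉ Center σ ∧
            (fun i : Fin n => (fun i => fF i x) (Fin.castAdd 2 i)) = x₀ := by
          refine ⟨?_, ?_, ?_⟩
          · rw [e0, hx]
            simp only [hg'', Function.update_self]
          · rw [e1]; exact hb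
          · rw [e2, hx]
        simp only [hH, if_pos hcond]
        rw [hx]
      · have hcond : ¬ ((fun i => fF i x) (Fin.natAdd n 0) = v₀ ∧
            (fun i => fF i x) (Fin.natAdd n 1) ∉ Center σ ∧
            (fun i : Fin n => (fun i => fF i x) (Fin.castAdd 2 i)) = x₀) := by
          rintro ⟨-, -, hlast⟩
          rw [e2] at hlast
          exact hx hlast
        simp only [hH, if_neg hcond]
        rw [show fF (Fin.natAdd n 0) x = g'' x from e0]
        simp only [hg'', Function.update_of_ne hx]
end typeII
section wrappers
variable {k h s : ℕ}

lemma center_ne_exists {ρ : Set (Fin h → Fin k)} (hρ : IsCentralRel ρ) :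
    ∃ b, b ∉ Center ρ := by
  by_contra hcon
  push_neg at hcon
  exact hρ.2.2.2 (Set.eq_univ_iff_forall.2 hcon)

lemma recast_self {e : s = s} {σ : Set (Fin s → Fin k)} : recast e σ = σ := by
  ext a
  show (fun i => a (Fin.cast e i)) ∈ σ ↔ a ∈ σ
  have : (fun i => a (Fin.cast e i)) = a := by
    funext i
    congr 1
  rw [this]

lemma absorbIIIa (hh : 2 ≤ h) {ρ σ : Set (Fin h → Fin k)}
    (hρ : IsCentralRel ρ) (hσ : IsCentralRel σ) (hσρ : σ ⊆ ρ)
    {E : Set (Op k)} (hE : IsClone k E) (hP2E : Pol2 ρ σ ⊆ E)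
    {n₀ : ℕ} {f : (Fin n₀ → Fin k) → Fin k} (hfE : (⟨n₀, f⟩ : Op k) ∈ E)
    (hfσ : ¬ Preserves f σ)
    {n : ℕ} {g : (Fin n → Fin k) → Fin k} (hg : Preserves g ρ) :
    (⟨n, g⟩ : Op k) ∈ E := by
  obtain ⟨c, hcσ⟩ := hσ.2.2.1
  have hcρ : c ∈ Center ρ := center_mono hσρ hcσ
  refine main2 hh hh hρ hσ hcρ hcσ (fun {n} _ => False) ?_ ?_ hE hP2E hfE hfσ hg
  · intro n g hg X hX hfalse
    exact hfalse.elim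
  · intro n D hD hns jm hinj hcols col hcol
    have hbij : Function.Bijective jm := Finite.injective_iff_bijective.1 hinj
    exact hρ.2.1 col (hσρ hcol) (Equiv.ofBijective jm hbij)

lemma absorbIIIb (hh : 2 ≤ h) {ρ σ : Set (Fin h → Fin k)}
    (hρ : IsCentralRel ρ) (hσ : IsCentralRel σ) (hρσ : ρ ⊆ σ)
    {E : Set (Op k)} (hE : IsClone k E) (hP2E : Pol2 ρ σ ⊆ E)
    {n₀ : ℕ} {f : (Fin n₀ → Fin k) → Fin k} (hfE : (⟨n₀, f⟩ : Op k) ∈ E)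
    (hfσ : ¬ Preserves f σ)
    {n : ℕ} {g : (Fin n → Fin k) → Fin k} (hg : Preserves g ρ) :
    (⟨n, g⟩ : Op k) ∈ E := by
  obtain ⟨c, hcρ⟩ := hρ.2.2.1
  have hcσ : c ∈ Center σ := center_mono hρσ hcρ
  refine main2 hh hh hρ hσ hcρ hcσ
    (fun {n} D => ∀ i, (fun j => D j i) ∈ ρ) ?_ ?_ hE hP2E hfE hfσ hg
  · intro n g hg X hX hsafe
    exact hρσ (hg X hsafe)
  · intro n D hD hns jm hinj hcols col hcol
    exfalso
    apply hns
    intro i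
    have hbij : Function.Bijective jm := Finite.injective_iff_bijective.1 hinj
    exact mem_of_perm hρ.2.1 (Equiv.ofBijective jm hbij) (hcols i)

lemma absorbIV (hh : 2 ≤ h) (hs2 : 2 ≤ s) (hsh : s < h)
    {ρ : Set (Fin h → Fin k)} {σ : Set (Fin s → Fin k)}
    (hρ : IsCentralRel ρ) (hσ : IsCentralRel σ)
    {c : Fin k} (hcρ : c ∈ Center ρ) (hcσ : c ∈ Center σ)
    {E : Set (Op k)} (hE : IsClone k E) (hP2E : Pol2 ρ σ ⊆ E)
    {n₀ : ℕ} {f : (Fin n₀ → Fin k) → Fin k} (hfE : (⟨n₀, f⟩ : Op k) ∈ E)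
    (hfσ : ¬ Preserves f σ)
    {n : ℕ} {g : (Fin n → Fin k) → Fin k} (hg : Preserves g ρ) :
    (⟨n, g⟩ : Op k) ∈ E := by
  refine main2 hh hs2 hρ hσ hcρ hcσ (fun {n} _ => False) ?_ ?_ hE hP2E hfE hfσ hg
  · intro n g hg X hX hfalse
    exact hfalse.elim
  · intro n D hD hns jm hinj hcols col hcol
    exfalso
    have := Fintype.card_le_of_injective jm hinj
    simp only [Fintype.card_fin] at this
    omega

lemma absorbV (hh : 2 ≤ h) (hlt : h < s)
    {ρ : Set (Fin h → Fin k)} {σ : Set (Fin s → Fin k)}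
    (hρ : IsCentralRel ρ) (hσ : IsCentralRel σ)
    (hlam : {a : Fin s → Fin k | (fun t : Fin h => a (Fin.castLE hlt.le t)) ∈ ρ} ⊆ σ)
    {E : Set (Op k)} (hE : IsClone k E) (hP2E : Pol2 ρ σ ⊆ E)
    {n₀ : ℕ} {f : (Fin n₀ → Fin k) → Fin k} (hfE : (⟨n₀, f⟩ : Op k) ∈ E)
    (hfσ : ¬ Preserves f σ)
    {n : ℕ} {g : (Fin n → Fin k) → Fin k} (hg : Preserves g ρ) :
    (⟨n, g⟩ : Op k) ∈ E := by
  obtain ⟨c, hcρ⟩ := hρ.2.2.1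
  have hcσ : c ∈ Center σ := center_V hlt.le hlam hcρ
  refine main2 hh (by omega) hρ hσ hcρ hcσ
    (fun {n} D => ∃ ι : Fin h → Fin s, Function.Injective ι ∧
      ∀ i, (fun t => D (ι t) i) ∈ ρ) ?_ ?_ hE hP2E hfE hfσ hg
  · rintro n g hg X hX ⟨ι, hι, hsub⟩
    have hout : (fun t => g (X (ι t))) ∈ ρ := hg (fun t => X (ι t)) hsub
    exact subtuple_mem hσ hlt.le hlam hι hout
  · intro n D hD hns jm hinj hcols col hcol
    exact absurd ⟨jm, hinj, hcols⟩ hns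

lemma witness_one (hh : 2 ≤ h) {ρ : Set (Fin h → Fin k)} {σ : Set (Fin 1 → Fin k)}
    (hρ : IsCentralRel ρ) (hσ : IsCentralRel σ) :
    ∃ F : Op k, F ∈ Pol1 ρ ∧ ¬ Preserves F.2 σ := by
  obtain ⟨c₀, hc₀⟩ := hσ.2.2.1
  obtain ⟨b, hb⟩ := center_ne_exists hσ
  obtain ⟨cρ, hcρ⟩ := hρ.2.2.1
  refine witness_op hρ hσ hcρ (fun _ (_ : Fin 1) => c₀) ?_ ?_ (fun _ => b) ?_ ?_
  · intro p p' _
    exact Subsingleton.elim p p'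
  · intro q
    exact center_one.1 hc₀
  · intro hmem
    exact hb (center_one.2 hmem)
  · intro jm hinj _
    exfalso
    have h01 : (⟨0, by omega⟩ : Fin h) = ⟨1, by omega⟩ := hinj (Subsingleton.elim _ _)
    simpa [Fin.ext_iff] using h01

lemma witness_IIIa (hh : 2 ≤ h) {ρ σ : Set (Fin h → Fin k)}
    (hρ : IsCentralRel ρ) (hσ : IsCentralRel σ) (hσρ : σ ⊂ ρ) :
    ∃ F : Op k, F ∈ Pol1 ρ ∧ ¬ Preserves F.2 σ := by
  obtain ⟨c₀, hc₀σ⟩ := hσ.2.2.1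
  have hc₀ρ : c₀ ∈ Center ρ := center_mono hσρ.subset hc₀σ
  have hhk : h ≤ k := (arity_lt hρ).le
  obtain ⟨A0, hA0inj, hA0head⟩ := exists_inj_tuple hhk (by omega) c₀
  obtain ⟨B', hB'ρ, hB'σ⟩ := Set.exists_of_ssubset hσρ
  refine witness_op hρ hσ hc₀ρ (fun p (_ : Fin 1) => A0 p) ?_ ?_ B' hB'σ ?_
  · intro p p' he
    exact hA0inj (congrFun he 0)
  · intro q
    exact mem_of_center hσ hc₀σ (i₀ := ⟨0, by omega⟩) (hA0head _ rfl)
  · intro jm hinj _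
    have hbij : Function.Bijective jm := Finite.injective_iff_bijective.1 hinj
    exact hρ.2.1 B' hB'ρ (Equiv.ofBijective jm hbij)

lemma witness_IIIb (hh : 2 ≤ h) {ρ σ : Set (Fin h → Fin k)}
    (hρ : IsCentralRel ρ) (hσ : IsCentralRel σ) (hρσ : ρ ⊂ σ) :
    ∃ F : Op k, F ∈ Pol1 ρ ∧ ¬ Preserves F.2 σ := by
  obtain ⟨cρ, hcρ⟩ := hρ.2.2.1
  obtain ⟨B', hB'σ, hB'ρ⟩ := Set.exists_of_ssubset hρσ
  obtain ⟨T0, hT0⟩ := exists_not_mem hσ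
  refine witness_op hρ hσ hcρ (fun p (_ : Fin 1) => B' p) ?_ ?_ T0 hT0 ?_
  · intro p p' he
    exact inj_of_not_mem hρ hB'ρ (congrFun he 0)
  · intro q
    exact hB'σ
  · intro jm hinj hcols
    exfalso
    have hbij : Function.Bijective jm := Finite.injective_iff_bijective.1 hinj
    exact hB'ρ (mem_of_perm hρ.2.1 (Equiv.ofBijective jm hbij) (hcols 0))

lemma witness_IV (hh : 2 ≤ h) (hs1 : 1 ≤ s) (hsh : s < h)
    {ρ : Set (Fin h → Fin k)} {σ : Set (Fin s → Fin k)}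
    (hρ : IsCentralRel ρ) (hσ : IsCentralRel σ)
    {c : Fin k} (hcρ : c ∈ Center ρ) (hcσ : c ∈ Center σ) :
    ∃ F : Op k, F ∈ Pol1 ρ ∧ ¬ Preserves F.2 σ := by
  have hhk : h < k := arity_lt hρ
  obtain ⟨A0, hA0inj, hA0head⟩ := exists_inj_tuple (show s ≤ k by omega) (by omega) c
  obtain ⟨T0, hT0⟩ := exists_not_mem hσ
  refine witness_op hρ hσ hcρ (fun p (_ : Fin 1) => A0 p) ?_ ?_ T0 hT0 ?_
  · intro p p' he
    exact hA0inj (congrFun he 0)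
  · intro q
    exact mem_of_center hσ hcσ (i₀ := ⟨0, by omega⟩) (hA0head _ rfl)
  · intro jm hinj _
    exfalso
    have := Fintype.card_le_of_injective jm hinj
    simp only [Fintype.card_fin] at this
    omega

lemma witness_V (hh : 2 ≤ h) (hlt : h < s)
    {ρ : Set (Fin h → Fin k)} {σ : Set (Fin s → Fin k)}
    (hρ : IsCentralRel ρ) (hσ : IsCentralRel σ)
    (hlam : {a : Fin s → Fin k | (fun t : Fin h => a (Fin.castLE hlt.le t)) ∈ ρ} ⊆ σ) :
    ∃ F : Op k, F ∈ Pol1 ρ ∧ ¬ Preserves F.2 σ := by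
  classical
  obtain ⟨cρ, hcρ⟩ := hρ.2.2.1
  have hcσ : cρ ∈ Center σ := center_V hlt.le hlam hcρ
  obtain ⟨R, hR⟩ := exists_not_mem hρ
  have hsk : s < k := arity_lt hσ
  obtain ⟨A0, hA0inj, hA0head⟩ := exists_inj_tuple hsk.le (by omega) cρ
  obtain ⟨T0, hT0⟩ := exists_not_mem hσ
  have : Fintype {ι : Fin h → Fin s // Function.Injective ι} := Fintype.ofFinite _
  set r : ℕ := Fintype.card {ι : Fin h → Fin s // Function.Injective ι} with hr
  set eJ : {ι : Fin h → Fin s // Function.Injective ι} ≃ Fin r := Fintype.equivFin _ with heJ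
  set A : Fin s → Fin (r + 1) → Fin k := fun p q =>
    if hq : (q : ℕ) < r then
      (if ht : ∃ t, (eJ.symm ⟨(q : ℕ), hq⟩).1 t = p then R (Classical.choose ht) else cρ)
    else A0 p with hA
  have hlast : ∀ p, A p ⟨r, by omega⟩ = A0 p := by
    intro p
    simp only [hA]
    rw [dif_neg (by simp)]
  refine witness_op hρ hσ hcρ A ?_ ?_ T0 hT0 ?_
  · intro p p' he
    apply hA0inj
    rw [← hlast p, ← hlast p', he]
  · intro q
    by_cases hq : (q : ℕ) < r
    · set ι := eJ.symm ⟨(q : ℕ), hq⟩ with hι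
      have hnsurj : ¬ Function.Surjective ι.1 := by
        intro hsurj
        have := Fintype.card_le_of_surjective ι.1 hsurj
        simp only [Fintype.card_fin] at this
        omega
      have hex : ∃ p₀, ∀ t, ι.1 t ≠ p₀ := by
        by_contra hcon
        push_neg at hcon
        exact hnsurj hcon
      obtain ⟨p₀, hp₀⟩ := hex
      refine mem_of_center hσ hcσ (i₀ := p₀) ?_
      simp only [hA]
      rw [dif_pos hq, dif_neg]
      push_neg
      intro t
      exact hp₀ t
    · have hcol : (fun p => A p q) = A0 := by
        funext p
        simp only [hA]
        rw [dif_neg hq]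
      rw [hcol]
      exact mem_of_center hσ hcσ (i₀ := ⟨0, by omega⟩) (hA0head _ rfl)
  · intro jm hinj hcols
    exfalso
    set q : Fin (r + 1) := ⟨(eJ ⟨jm, hinj⟩ : Fin r), by omega⟩ with hq
    have hcolR : (fun t => A (jm t) q) = R := by
      funext t
      have hqlt : ((q : Fin (r+1)) : ℕ) < r := (eJ ⟨jm, hinj⟩).2
      simp only [hA]
      rw [dif_pos hqlt]
      have hfin : (⟨((q : Fin (r+1)) : ℕ), hqlt⟩ : Fin r) = eJ ⟨jm, hinj⟩ := by
        exact Fin.ext rfl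
      rw [hfin, Equiv.symm_apply_apply]
      have ht : ∃ t', jm t' = jm t := ⟨t, rfl⟩
      rw [dif_pos ht]
      congr 1
      exact hinj (Classical.choose_spec ht)
    have := hcols q
    rw [hcolR] at this
    exact hR this

/-- Assembling maximality from a witness and an absorption property. -/
lemma maximalIn_of {ρ : Set (Fin h → Fin k)} {σ : Set (Fin s → Fin k)}
    (hW : ∃ F : Op k, F ∈ Pol1 ρ ∧ ¬ Preserves F.2 σ)
    (habs : ∀ (E : Set (Op k)), IsClone k E → Pol2 ρ σ ⊆ E →
      ∀ (n₀ : ℕ) (f : (Fin n₀ → Fin k) → Fin k), (⟨n₀, f⟩ : Op k) ∈ E →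
      ¬ Preserves f σ → ∀ (n : ℕ) (g : (Fin n → Fin k) → Fin k),
      Preserves g ρ → (⟨n, g⟩ : Op k) ∈ E) :
    MaximalIn (Pol2 ρ σ) (Pol1 ρ) := by
  obtain ⟨F, hFρ, hFσ⟩ := hW
  constructor
  · rw [Set.ssubset_def]
    refine ⟨Set.inter_subset_left, ?_⟩
    intro hsub
    exact hFσ (hsub hFρ).2
  · rintro E hE ⟨h1, h2⟩
    rw [Set.ssubset_def] at h1 h2
    obtain ⟨fop, hfE, hfnot⟩ := Set.not_subset.1 h1.2
    obtain ⟨n₀, f⟩ := fop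
    have hfρ : Preserves f ρ := h2.1 hfE
    have hfσ : ¬ Preserves f σ := fun hp => hfnot ⟨hfρ, hp⟩
    apply h2.2
    intro G hG
    obtain ⟨n, g⟩ := G
    exact habs E hE h1.1 n₀ f hfE hfσ n g hG

end wrappers
/-- if `σ` is of type I–V then `Pol{ρ,σ}` is maximal in `Pol ρ`. -/
theorem polPair_maximal_of_type {k h s : ℕ} (hk : 3 ≤ k) (hh : 2 ≤ h) (hs : 1 ≤ s)
    (ρ : Set (Fin h → Fin k)) (σ : Set (Fin s → Fin k))
    (hρ : IsCentralRel ρ) (hσ : IsCentralRel σ)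
    (hne : ¬ ∃ e : s = h, recast e σ = ρ)
    (htype : TypeI ρ σ ∨ TypeII ρ σ ∨ TypeIII ρ σ ∨ TypeIV ρ σ ∨ TypeV ρ σ) :
    MaximalIn (Pol2 ρ σ) (Pol1 ρ) := by
  rcases htype with hI | hII | hIII | hIV | hV
  · -- Type I
    obtain ⟨hs1, c, hc⟩ := hI
    subst hs1
    refine maximalIn_of (witness_one hh hρ hσ) ?_
    intro E hE hsub n₀ f hfE hfσ n g hg
    exact absorbI hh hρ hc.1 hc.2 hE hsub hfE hfσ hg
  · -- Type II
    obtain ⟨hs1, hh2, hiff, hchain⟩ := hII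
    subst hs1
    subst hh2
    refine maximalIn_of (witness_one (by omega) hρ hσ) ?_
    intro E hE hsub n₀ f hfE hfσ n g hg
    exact absorbII hρ hiff hchain hE hsub hfE hfσ hg
  · -- Type III
    obtain ⟨e, hcase⟩ := hIII
    subst e
    rw [recast_self] at hcase
    rcases hcase with hσρ | hρσ
    · refine maximalIn_of (witness_IIIa hh hρ hσ hσρ) ?_
      intro E hE hsub n₀ f hfE hfσ n g hg
      exact absorbIIIa hh hρ hσ hσρ.subset hE hsub hfE hfσ hg
    · refine maximalIn_of (witness_IIIb hh hρ hσ hρσ) ?_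
      intro E hE hsub n₀ f hfE hfσ n g hg
      exact absorbIIIb hh hρ hσ hρσ.subset hE hsub hfE hfσ hg
  · -- Type IV
    obtain ⟨hs2, hsh, c, hc⟩ := hIV
    refine maximalIn_of (witness_IV hh hs hsh hρ hσ hc.1 hc.2) ?_
    intro E hE hsub n₀ f hfE hfσ n g hg
    exact absorbIV hh hs2 hsh hρ hσ hc.1 hc.2 hE hsub hfE hfσ hg
  · -- Type V
    obtain ⟨hh', hlt, hsub'⟩ := hV
    refine maximalIn_of (witness_V hh hlt hρ hσ hsub'.subset) ?_
    intro E hE hsub n₀ f hfE hfσ n g hg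
    exact absorbV hh hlt hρ hσ hsub'.subset hE hsub hfE hfσ hg
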